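/- Let X be a topological vector space, Y ⊆ X a subspace, and A ⊆ X an open convex set intersecting Y. Suppose every continuous quasiconvex function on A ∩ Y extends to a continuous quasiconvex function on A. Then for each Ω(A∩Y)-family {C_α}_{α∈ℝ} of relatively open convex sets in Y there exists an Ω(A)-family {D_α}_{α∈ℝ} of open convex sets in X such that ⋃_{γ<α} C_γ ⊆ D_α ∩ Y ⊆ C_α for every α ∈ ℝ. -/

import Mathlib

/-- `D` is an Ω(E)-family in the ambient space: empty intersection, union `E`,
and the closure of `D α` relative to `E` is contained in `D β` whenever `α < β`. -/
def IsOmegaFamily {X : Type*} [TopologicalSpace X] (E : Set X) (D : ℝ → Set X) : Prop :=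
  (⋂ α : ℝ, D α) = ∅ ∧ (⋃ α : ℝ, D α) = E ∧
    ∀ α β : ℝ, α < β → closure (D α) ∩ E ⊆ D β

theorem stmt_16 {X : Type*} [AddCommGroup X] [Module ℝ X] [TopologicalSpace X]
    [IsTopologicalAddGroup X] [ContinuousSMul ℝ X]
    (Y : Submodule ℝ X) (A : Set X) (hAopen : IsOpen A) (hAconv : Convex ℝ A)
    (hne : (A ∩ (Y : Set X)).Nonempty)
    (hQE : ∀ f : X → ℝ, ContinuousOn f (A ∩ (Y : Set X)) →
      QuasiconvexOn ℝ (A ∩ (Y : Set X)) f →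
      ∃ F : X → ℝ, ContinuousOn F A ∧ QuasiconvexOn ℝ A F ∧
        ∀ x ∈ A ∩ (Y : Set X), F x = f x) :
    ∀ C : ℝ → Set X,
      (∀ α, Convex ℝ (C α) ∧ ∃ G : Set X, IsOpen G ∧ C α = G ∩ (Y : Set X)) →
      IsOmegaFamily (A ∩ (Y : Set X)) C →
      ∃ D : ℝ → Set X, (∀ α, IsOpen (D α) ∧ Convex ℝ (D α)) ∧
        IsOmegaFamily A D ∧
        ∀ α : ℝ, (⋃ γ < α, C γ) ⊆ D α ∩ (Y : Set X) ∧ D α ∩ (Y : Set X) ⊆ C α := by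
  intro C hC hOm
  obtain ⟨hCi, hCu, hCcl⟩ := hOm
  set E := A ∩ (Y : Set X) with hE
  have hCE : ∀ α, C α ⊆ E := fun α => hCu ▸ Set.subset_iUnion C α
  have hmono : ∀ ⦃α β : ℝ⦄, α ≤ β → C α ⊆ C β := by
    intro α β hab
    rcases eq_or_lt_of_le hab with rfl | h
    · exact subset_rfl
    · intro x hx
      exact hCcl α β h ⟨subset_closure hx, hCE α hx⟩
  set f : X → ℝ := fun x => sInf {α | x ∈ C α} with hf
  have hSne : ∀ x ∈ E, {α | x ∈ C α}.Nonempty := by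
    intro x hx
    rw [← hCu] at hx
    exact Set.mem_iUnion.mp hx
  have hSbdd : ∀ x, BddBelow {α | x ∈ C α} := by
    intro x
    have hex : ∃ α, x ∉ C α := by
      by_contra h
      push_neg at h
      have : x ∈ ⋂ α, C α := Set.mem_iInter.mpr h
      rw [hCi] at this; exact this
    obtain ⟨α₀, hα₀⟩ := hex
    exact ⟨α₀, fun γ hγ => le_of_not_gt fun h => hα₀ (hmono h.le hγ)⟩
  have hle : ∀ x, ∀ α, x ∈ C α → f x ≤ α := fun x α hx => csInf_le (hSbdd x) hx
  have hlt : ∀ x ∈ E, ∀ α, f x < α → ∃ γ < α, x ∈ C γ := by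
    intro x hx α h
    obtain ⟨γ, hγ, hγα⟩ := exists_lt_of_csInf_lt (hSne x hx) h
    exact ⟨γ, hγα, hγ⟩
  have hge : ∀ x ∈ E, ∀ α, x ∉ C α → α ≤ f x := by
    intro x hx α hno
    exact le_csInf (hSne x hx) fun γ hγ => le_of_not_gt fun h => hno (hmono h.le hγ)
  -- continuity of f on E
  have hfc : ContinuousOn f E := by
    intro x₀ hx₀
    show Filter.Tendsto f (nhdsWithin x₀ E) (nhds (f x₀))
    rw [Metric.tendsto_nhds]
    intro ε hε
    obtain ⟨_, G, hGopen, hG⟩ := hC (f x₀ + ε/2)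
    have hx₀mem : x₀ ∈ C (f x₀ + ε/2) := by
      obtain ⟨γ, hγ, hxγ⟩ := hlt x₀ hx₀ (f x₀ + ε/2) (by linarith)
      exact hmono hγ.le hxγ
    have hx₀cl : x₀ ∉ closure (C (f x₀ - ε/2)) := by
      intro h
      have h1 : x₀ ∈ C (f x₀ - ε/4) := hCcl _ _ (by linarith) ⟨h, hx₀⟩
      have h2 := hle x₀ _ h1
      linarith
    have : {x | dist (f x) (f x₀) < ε} ∈ nhdsWithin x₀ E := by
      rw [mem_nhdsWithin]
      refine ⟨G ∩ (closure (C (f x₀ - ε/2)))ᶜ,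
        hGopen.inter isClosed_closure.isOpen_compl, ⟨?_, hx₀cl⟩, ?_⟩
      · rw [hG] at hx₀mem; exact hx₀mem.1
      · rintro x ⟨⟨hxG, hxcl⟩, hxE⟩
        have hx1 : x ∈ C (f x₀ + ε/2) := by rw [hG]; exact ⟨hxG, hxE.2⟩
        have h1 : f x ≤ f x₀ + ε/2 := hle x _ hx1
        have h2 : f x₀ - ε/2 ≤ f x :=
          hge x hxE _ (fun h => hxcl (subset_closure h))
        simp only [Set.mem_setOf_eq, Real.dist_eq, abs_sub_lt_iff]
        constructor <;> linarith
    exact this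
  -- quasiconvexity of f on E
  have hfq : QuasiconvexOn ℝ E f := by
    intro r x hx y hy a b ha hb hab
    obtain ⟨hxE, hxr⟩ := hx
    obtain ⟨hyE, hyr⟩ := hy
    have hmem : ∀ β, r < β → a • x + b • y ∈ C β := by
      intro β hβ
      have hxC : x ∈ C β := by
        obtain ⟨γ, hγ, h⟩ := hlt x hxE β (lt_of_le_of_lt hxr hβ)
        exact hmono hγ.le h
      have hyC : y ∈ C β := by
        obtain ⟨γ, hγ, h⟩ := hlt y hyE β (lt_of_le_of_lt hyr hβ)
        exact hmono hγ.le h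
      exact (hC β).1 hxC hyC ha hb hab
    have hzE : a • x + b • y ∈ E := hCE _ (hmem (r+1) (by linarith))
    refine ⟨hzE, ?_⟩
    by_contra h
    push_neg at h
    have := hle _ _ (hmem ((r + f (a•x+b•y))/2) (by linarith))
    linarith
  obtain ⟨F, hFc, hFq, hFeq⟩ := hQE f hfc hfq
  refine ⟨fun α => A ∩ F ⁻¹' Set.Iio α, fun α => ⟨?_, ?_⟩, ⟨?_, ?_, ?_⟩, ?_⟩
  · exact hFc.isOpen_inter_preimage hAopen isOpen_Iio
  · intro x hx y hy a b ha hb hab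
    obtain ⟨hxA, hxα⟩ := hx
    obtain ⟨hyA, hyα⟩ := hy
    have h := hFq (max (F x) (F y)) ⟨hxA, le_max_left _ _⟩ ⟨hyA, le_max_right _ _⟩ ha hb hab
    exact ⟨h.1, lt_of_le_of_lt h.2 (max_lt hxα hyα)⟩
  · ext x
    simp only [Set.mem_iInter, Set.mem_empty_iff_false, iff_false]
    intro h
    exact lt_irrefl (F x) (h (F x)).2
  · apply Set.Subset.antisymm
    · exact Set.iUnion_subset fun α => Set.inter_subset_left
    · intro x hx
      exact Set.mem_iUnion.mpr ⟨F x + 1, hx, Set.mem_preimage.mpr (Set.mem_Iio.mpr (lt_add_one (F x)))⟩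
  · intro α β hαβ x hx
    obtain ⟨hxcl, hxA⟩ := hx
    have hcont : ContinuousAt F x := hFc.continuousAt (hAopen.mem_nhds hxA)
    have hnb : (nhdsWithin x (A ∩ F ⁻¹' Set.Iio α)).NeBot :=
      mem_closure_iff_nhdsWithin_neBot.mp hxcl
    have hten : Filter.Tendsto F (nhdsWithin x (A ∩ F ⁻¹' Set.Iio α)) (nhds (F x)) :=
      hcont.continuousWithinAt
    have hle2 : F x ≤ α := le_of_tendsto hten (by
      filter_upwards [self_mem_nhdsWithin] with y hy
      exact le_of_lt hy.2)
    exact ⟨hxA, lt_of_le_of_lt hle2 hαβ⟩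
  · intro α
    constructor
    · intro x hx
      simp only [Set.mem_iUnion] at hx
      obtain ⟨γ, hγ, hxγ⟩ := hx
      have hxE : x ∈ E := hCE γ hxγ
      refine ⟨⟨hxE.1, ?_⟩, hxE.2⟩
      show F x < α
      rw [hFeq x hxE]
      exact lt_of_le_of_lt (hle x γ hxγ) hγ
    · rintro x ⟨⟨hxA, hxα⟩, hxY⟩
      have hxE : x ∈ E := ⟨hxA, hxY⟩
      have hfx : f x < α := by rw [← hFeq x hxE]; exact hxα
      obtain ⟨γ, hγ, h⟩ := hlt x hxE α hfx
      exact hmono hγ.le h
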